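/- arXiv:1112.4800 — 4 statements merged into one kernel-verified Lean document; each statement's English description precedes it below -/
import Mathlib

section
/- Let (ξ_σ)_{σ<ω₁} be a strictly increasing family of countable ordinals indexed by the countable ordinals, and set ξ_{ω₁} = ω₁. Then there exists a linear isometry U : C([0,ω₁]) → C([0,ω₁]) such that U(1_{[0,σ]}) = 1_{[0,ξ_σ]} for every ordinal σ ≤ ω₁, and the range of U equals the closed linear span of {1_{[0,ξ_σ]} : σ ≤ ω₁} in C([0,ω₁]); moreover U is the unique bounded linear map with these prescribed values. -/
set_option synthInstance.maxHeartbeats 1000000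
set_option maxHeartbeats 2000000

noncomputable section
open Set Ordinal

/-- `ω₁`, the first uncountable ordinal. -/
abbrev omega1 : Ordinal.{0} := Ordinal.omega 1

/-- Every ordinal interval `[0, o]` is a compact space in its (inherited) order topology. -/
instance (o : Ordinal) : CompactSpace (Set.Iic o) := by
  have h : IsCompact (Set.Iic o) := by
    have := isCompact_Icc (a := (⊥ : Ordinal)) (b := o)
    rwa [Set.Icc_bot] at this
  exact isCompact_iff_compactSpace.mp h

/-- The Banach space `C([0, ω₁])` of continuous real-valued functions on `[0, ω₁]`,
with the supremum norm. -/
abbrev CC := C(Set.Iic omega1, ℝ)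

/-- The interval `{α ∈ [0, o] : α ≤ σ}` is clopen. -/
theorem isClopen_le (o σ : Ordinal) : IsClopen {α : Set.Iic o | (α : Ordinal) ≤ σ} := by
  constructor
  · exact isClosed_Iic.preimage continuous_subtype_val
  · have : {α : Set.Iic o | (α : Ordinal) ≤ σ}
        = (Subtype.val) ⁻¹' (Set.Iio (Order.succ σ)) := by
      ext α; simp [Order.lt_succ_iff]
    rw [this]
    exact isOpen_Iio.preimage continuous_subtype_val

/-- The indicator function `1_{[0,σ]}` as an element of `C([0, ω₁])`. -/
def indic (σ : Ordinal) : CC :=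
  letI : ∀ j : Set.Iic omega1, Decidable (j ∈ {α : Set.Iic omega1 | (α : Ordinal) ≤ σ}) :=
    fun _ => Classical.dec _
  ⟨({α : Set.Iic omega1 | (α : Ordinal) ≤ σ}).piecewise (fun _ => (1 : ℝ)) (fun _ => 0),
    Continuous.piecewise
      (fun a ha => by
        rw [(isClopen_le omega1 σ).frontier_eq] at ha
        exact absurd ha (Set.notMem_empty a))
      continuous_const continuous_const⟩

theorem indic_apply (σ : Ordinal) (α : Set.Iic omega1) :
    indic σ α = if (α : Ordinal) ≤ σ then 1 else 0 := by
  simp [indic, Set.piecewise]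

theorem indic_mul (σ τ : Ordinal) : indic σ * indic τ = indic (min σ τ) := by
  ext α
  simp only [ContinuousMap.mul_apply, indic_apply, le_min_iff]
  by_cases h1 : (α : Ordinal) ≤ σ
  · by_cases h2 : (α : Ordinal) ≤ τ
    · simp [h1, h2]
    · simp [h1, h2]
  · simp [h1]

theorem indic_omega1 : indic omega1 = 1 := by
  ext α
  rw [indic_apply, if_pos (show (α : Ordinal) ≤ omega1 from α.2)]
  rfl

open scoped Pointwise in
theorem closure_span_indic :
    closure (Submodule.span ℝ {g : CC | ∃ σ ≤ omega1, g = indic σ} : Set CC) = Set.univ := by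
  set S : Set CC := {g | ∃ σ ≤ omega1, g = indic σ} with hS
  have h1 : (1 : CC) ∈ Submodule.span ℝ S :=
    Submodule.subset_span ⟨omega1, le_rfl, indic_omega1.symm⟩
  have hSS : S * S ⊆ S := by
    rintro z ⟨a, ha, b, hb, rfl⟩
    obtain ⟨σ, hσ, rfl⟩ := ha
    obtain ⟨τ, hτ, rfl⟩ := hb
    exact ⟨min σ τ, (min_le_left _ _).trans hσ, (indic_mul σ τ)⟩
  have hmul : ∀ x y : CC, x ∈ Submodule.span ℝ S → y ∈ Submodule.span ℝ S →
      x * y ∈ Submodule.span ℝ S := by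
    intro x y hx hy
    have h := Submodule.mul_mem_mul hx hy
    rw [Submodule.span_mul_span] at h
    exact Submodule.span_le.mpr ((Set.Subset.trans hSS) Submodule.subset_span) h
  set A : Subalgebra ℝ CC := (Submodule.span ℝ S).toSubalgebra h1 hmul with hA
  have hsep : A.SeparatesPoints := by
    intro x y hxy
    have hne : (x : Ordinal) ≠ y := fun h => hxy (Subtype.ext h)
    rcases hne.lt_or_gt with h | h
    · refine ⟨indic x.1, ⟨indic x.1, Submodule.subset_span ⟨x.1, x.2, rfl⟩, rfl⟩, ?_⟩
      simp [indic_apply, h.not_ge]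
    · refine ⟨indic y.1, ⟨indic y.1, Submodule.subset_span ⟨y.1, y.2, rfl⟩, rfl⟩, ?_⟩
      simp [indic_apply, h.not_ge]
  have htop := ContinuousMap.subalgebra_topologicalClosure_eq_top_of_separatesPoints A hsep
  have : (A.topologicalClosure : Set CC) = Set.univ := by
    rw [htop]; rfl
  rwa [Subalgebra.topologicalClosure_coe] at this

/-- Given a strictly increasing family `(ξ_σ)_{σ<ω₁}` of countable ordinals with `ξ_{ω₁} = ω₁`,
there is a unique bounded linear map `U` on `C([0,ω₁])` with `U 1_{[0,σ]} = 1_{[0,ξ_σ]}` for all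
`σ ≤ ω₁`; it is an isometry and its range is the closed linear span of the `1_{[0,ξ_σ]}`. -/
theorem exists_isometry_indicator (ξ : Ordinal → Ordinal)
    (hcount : ∀ σ < omega1, ξ σ < omega1)
    (hmono : ∀ σ τ : Ordinal, σ < τ → τ < omega1 → ξ σ < ξ τ)
    (htop : ξ omega1 = omega1) :
    ∃ U : CC →L[ℝ] CC,
      (∀ f : CC, ‖U f‖ = ‖f‖) ∧
      (∀ σ ≤ omega1, U (indic σ) = indic (ξ σ)) ∧
      (LinearMap.range (U : CC →ₗ[ℝ] CC) : Set CC)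
        = closure (Submodule.span ℝ {g : CC | ∃ σ ≤ omega1, g = indic (ξ σ)} : Set CC) ∧
      (∀ V : CC →L[ℝ] CC, (∀ σ ≤ omega1, V (indic σ) = indic (ξ σ)) → V = U) := by
  -- monotonicity facts on [0, ω₁]
  have hξle : ∀ σ ≤ omega1, ξ σ ≤ omega1 := by
    intro σ hσ
    rcases hσ.lt_or_eq with h | h
    · exact (hcount σ h).le
    · rw [h, htop]
  have hξlt : ∀ σ τ : Ordinal, σ < τ → τ ≤ omega1 → ξ σ < ξ τ := by
    intro σ τ hst hτ
    rcases hτ.lt_or_eq with h | h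
    · exact hmono σ τ hst h
    · rw [h, htop]; exact hcount σ (h ▸ hst)
  have hξmono : ∀ σ τ : Ordinal, σ ≤ τ → τ ≤ omega1 → ξ σ ≤ ξ τ := by
    intro σ τ hst hτ
    rcases hst.lt_or_eq with h | h
    · exact (hξlt σ τ h hτ).le
    · rw [h]
  -- the adjoint map φ
  have hne : ∀ α : Set.Iic omega1,
      {σ : Ordinal | (α : Ordinal) ≤ ξ σ ∧ σ ≤ omega1}.Nonempty :=
    fun α => ⟨omega1, by rw [htop]; exact α.2, le_rfl⟩
  set φf : Set.Iic omega1 → Ordinal :=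
    fun α => sInf {σ : Ordinal | (α : Ordinal) ≤ ξ σ ∧ σ ≤ omega1} with hφf
  have hφmem : ∀ α : Set.Iic omega1, (α : Ordinal) ≤ ξ (φf α) ∧ φf α ≤ omega1 :=
    fun α => csInf_mem (hne α)
  have hφle : ∀ α, φf α ≤ omega1 := fun α => (hφmem α).2
  have key : ∀ (α : Set.Iic omega1) (σ : Ordinal), σ ≤ omega1 →
      (φf α ≤ σ ↔ (α : Ordinal) ≤ ξ σ) := by
    intro α σ hσ
    constructor
    · intro h
      exact (hφmem α).1.trans (hξmono _ _ h hσ)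
    · intro h
      exact csInf_le' ⟨h, hσ⟩
  -- continuity of φf
  have hcv : Continuous φf := by
    rw [OrderTopology.topology_eq_generate_intervals (α := Ordinal.{0})]
    refine continuous_generateFrom_iff.mpr ?_
    rintro s ⟨a, rfl | rfl⟩
    · -- Ioi a
      by_cases ha : a ≤ omega1
      · have : φf ⁻¹' Set.Ioi a = Subtype.val ⁻¹' Set.Ioi (ξ a) := by
          ext α
          simp only [Set.mem_preimage, Set.mem_Ioi, ← not_le]
          exact not_congr (key α a ha)
        rw [this]
        exact isOpen_Ioi.preimage continuous_subtype_val
      · have : φf ⁻¹' Set.Ioi a = ∅ := by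
          refine Set.eq_empty_iff_forall_notMem.mpr fun α h => ha ?_
          exact le_of_lt (lt_of_lt_of_le h (hφle α))
        rw [this]; exact isOpen_empty
    · -- Iio a
      have : φf ⁻¹' Set.Iio a = ⋃ τ ∈ Set.Iio a, {α | φf α ≤ τ} := by
        ext α
        simp only [Set.mem_preimage, Set.mem_Iio, Set.mem_iUnion, Set.mem_setOf_eq]
        exact ⟨fun h => ⟨φf α, h, le_rfl⟩, fun ⟨τ, hτ, h⟩ => lt_of_le_of_lt h hτ⟩
      rw [this]
      refine isOpen_biUnion fun τ _ => ?_
      by_cases hτ : τ ≤ omega1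
      · have : {α : Set.Iic omega1 | φf α ≤ τ}
            = Subtype.val ⁻¹' Set.Iio (Order.succ (ξ τ)) := by
          ext α
          simp only [Set.mem_setOf_eq, Set.mem_preimage, Set.mem_Iio, Order.lt_succ_iff]
          exact key α τ hτ
        rw [this]
        exact isOpen_Iio.preimage continuous_subtype_val
      · have : {α : Set.Iic omega1 | φf α ≤ τ} = Set.univ :=
          Set.eq_univ_of_forall fun α => (hφle α).trans (le_of_not_ge hτ)
        rw [this]; exact isOpen_univ
  set φ : C(Set.Iic omega1, Set.Iic omega1) :=
    ⟨fun α => ⟨φf α, hφle α⟩, (hcv.subtype_mk hφle)⟩ with hφ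
  -- surjectivity of φ
  have hsurj : Function.Surjective φ := by
    intro β
    refine ⟨(⟨ξ β.1, hξle _ β.2⟩ : Set.Iic omega1), Subtype.ext ?_⟩
    have h1 : φf ⟨ξ β.1, hξle _ β.2⟩ ≤ β.1 := (key _ β.1 β.2).mpr le_rfl
    have h2 : β.1 ≤ φf ⟨ξ β.1, hξle _ β.2⟩ := by
      by_contra hc
      push_neg at hc
      have := (hφmem ⟨ξ β.1, hξle _ β.2⟩).1
      exact absurd this (not_le_of_gt (hξlt _ _ hc β.2))
    exact le_antisymm h1 h2
  -- the composition operator, as a linear isometry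
  set L : CC →ₗ[ℝ] CC :=
    { toFun := fun f => f.comp φ
      map_add' := fun f g => by ext x; rfl
      map_smul' := fun c f => by ext x; rfl } with hL
  have hnorm : ∀ f : CC, ‖L f‖ = ‖f‖ := by
    intro f
    apply le_antisymm
    · exact (ContinuousMap.norm_le _ (norm_nonneg f)).mpr fun x => f.norm_coe_le_norm (φ x)
    · refine (ContinuousMap.norm_le _ (norm_nonneg _)).mpr fun x => ?_
      obtain ⟨y, rfl⟩ := hsurj x
      exact (L f).norm_coe_le_norm y
  set U : CC →L[ℝ] CC := (LinearIsometry.mk L hnorm).toContinuousLinearMap with hUdef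
  have hUnorm : ∀ f : CC, ‖U f‖ = ‖f‖ := hnorm
  have hU : ∀ σ ≤ omega1, U (indic σ) = indic (ξ σ) := by
    intro σ hσ
    ext α
    show indic σ (φ α) = indic (ξ σ) α
    rw [indic_apply, indic_apply]
    exact if_congr (key α σ hσ) rfl rfl
  set S : Set CC := {g | ∃ σ ≤ omega1, g = indic σ} with hS
  set T : Set CC := {g | ∃ σ ≤ omega1, g = indic (ξ σ)} with hT
  have hmapsto : Set.MapsTo U (Submodule.span ℝ S : Set CC) (Submodule.span ℝ T : Set CC) := by
    intro x hx
    have : Submodule.span ℝ S ≤ (Submodule.span ℝ T).comap (U : CC →ₗ[ℝ] CC) := by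
      refine Submodule.span_le.mpr ?_
      rintro g ⟨σ, hσ, rfl⟩
      have : U (indic σ) ∈ Submodule.span ℝ T := by
        rw [hU σ hσ]; exact Submodule.subset_span ⟨σ, hσ, rfl⟩
      exact this
    exact this hx
  have hisom : Isometry U := AddMonoidHomClass.isometry_of_norm U hUnorm
  refine ⟨U, hUnorm, hU, ?_, ?_⟩
  · ext g
    constructor
    · rintro ⟨f, rfl⟩
      have hf : f ∈ closure (Submodule.span ℝ S : Set CC) := by
        rw [closure_span_indic]; trivial
      exact map_mem_closure U.continuous hf hmapsto
    · intro hg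
      have hclosed : IsClosed (Set.range U) := hisom.isClosedEmbedding.isClosed_range
      have hsub : (Submodule.span ℝ T : Set CC) ⊆ Set.range (⇑U) := by
        have hle : Submodule.span ℝ T ≤ LinearMap.range (U : CC →ₗ[ℝ] CC) := by
          refine Submodule.span_le.mpr ?_
          rintro g ⟨σ, hσ, rfl⟩
          exact ⟨indic σ, hU σ hσ⟩
        intro x hx
        exact hle hx
      have hmem : g ∈ Set.range (⇑U) := closure_minimal hsub hclosed hg
      obtain ⟨f, rfl⟩ := hmem
      exact ⟨f, rfl⟩
  · intro V hV
    refine ContinuousLinearMap.ext_on (s := S)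
      (dense_iff_closure_eq.mpr closure_span_indic) ?_
    rintro g ⟨σ, hσ, rfl⟩
    rw [hV σ hσ, hU σ hσ]
end
end

section
/- Let (ξ_σ)_{σ<ω₁} be a strictly increasing family of countable ordinals indexed by the countable ordinals, and set ξ_{ω₁} = ω₁. Then there exists a continuous map φ : [0,ω₁] → [0,ω₁] with φ∘φ = φ such that the composition operator Φ : f ↦ f∘φ is a bounded linear projection on C([0,ω₁]) of norm at most one (Φ∘Φ = Φ, ‖Φ‖ ≤ 1) whose range equals the closed linear span of {1_{[0,ξ_σ]} : σ ≤ ω₁}. -/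
set_option synthInstance.maxHeartbeats 1000000
set_option maxHeartbeats 2000000

noncomputable section
open Set Ordinal

namespace ProjAux

open scoped Classical

variable (S : Set Ordinal)

/-- least element of `S` that is `≥ α` (junk if none). -/
def tt (α : Ordinal) : Ordinal := sInf (S ∩ Ici α)

/-- sup of the elements of `S` strictly below `s`. -/
def uu (s : Ordinal) : Ordinal := sSup (S ∩ Iio s)

/-- the condition for the exceptional branch -/
def cnd (α : Ordinal) : Prop := uu S (tt S α) ∉ S ∧ (S ∩ Iio (tt S α)).Nonempty

/-- the retraction. -/
def ph (α : Ordinal) : Ordinal :=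
  if cnd S α then uu S (tt S α) else tt S α

variable {S}

lemma ph_eq_uu {α} (h : cnd S α) : ph S α = uu S (tt S α) := if_pos h

lemma ph_eq_tt {α} (h : ¬ cnd S α) : ph S α = tt S α := if_neg h

lemma cnd_congr {α β} (h : tt S α = tt S β) : cnd S α ↔ cnd S β := by unfold cnd; rw [h]

lemma ph_eq_of_tt_eq {α β} (h : tt S α = tt S β) : ph S α = ph S β := by
  unfold ph cnd; rw [h]

variable {Θ : Ordinal} (hΘ : Θ ∈ S) (hSle : ∀ x ∈ S, x ≤ Θ)
include hΘ

lemma tt_mem {α} (hα : α ≤ Θ) : tt S α ∈ S :=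
  (csInf_mem (⟨Θ, hΘ, hα⟩ : (S ∩ Ici α).Nonempty)).1

lemma le_tt {α} (hα : α ≤ Θ) : α ≤ tt S α :=
  (csInf_mem (⟨Θ, hΘ, hα⟩ : (S ∩ Ici α).Nonempty)).2

omit hΘ in
lemma tt_le {α x} (hx : x ∈ S) (hαx : α ≤ x) : tt S α ≤ x :=
  csInf_le (OrderBot.bddBelow _) ⟨hx, hαx⟩

include hSle in
lemma le_uu {s y} (hy : y ∈ S ∩ Iio s) : y ≤ uu S s :=
  le_csSup (⟨Θ, fun x hx => hSle x hx.1⟩ : BddAbove (S ∩ Iio s)) hy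

omit hΘ in
lemma mem_lt_of_lt_tt {α y} (hy : y ∈ S ∩ Iio (tt S α)) : y < α := by
  by_contra h
  push_neg at h
  exact absurd (tt_le hy.1 h) (not_le.mpr hy.2)

omit hΘ in
lemma uu_tt_le {α} : uu S (tt S α) ≤ α := by
  rcases (S ∩ Iio (tt S α)).eq_empty_or_nonempty with h | h
  · simp [uu, h]
  · exact csSup_le h fun y hy => (mem_lt_of_lt_tt hy).le

omit hΘ in
lemma uu_le {s} : uu S s ≤ s := by
  rcases (S ∩ Iio s).eq_empty_or_nonempty with h | h
  · simp [uu, h]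
  · exact csSup_le h fun y hy => hy.2.le

omit hΘ in
lemma ph_le_tt {α} : ph S α ≤ tt S α := by
  unfold ph; split_ifs
  · exact uu_le
  · exact le_rfl

omit hΘ in
lemma uu_tt_le_ph {α} : uu S (tt S α) ≤ ph S α := by
  unfold ph; split_ifs
  · exact le_rfl
  · exact uu_le

include hSle in
lemma ph_le_top {α} (hα : α ≤ Θ) : ph S α ≤ Θ :=
  le_trans ph_le_tt (hSle _ (tt_mem hΘ hα))

include hSle in
lemma tt_of_mem {s} (hs : s ∈ S) : tt S s = s :=
  le_antisymm (tt_le hs le_rfl) (le_tt hΘ (hSle s hs))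

include hSle in
/-- Key equivalence: `ph S α ≤ x ↔ α ≤ x` for `x ∈ S`. -/
lemma ph_le_iff {α} (hα : α ≤ Θ) {x} (hx : x ∈ S) : ph S α ≤ x ↔ α ≤ x := by
  constructor
  · intro h
    by_cases hc : cnd S α
    · rw [ph_eq_uu hc] at h
      rcases eq_or_lt_of_le h with he | hlt
      · exact absurd (he ▸ hx) hc.1
      · rcases le_or_gt (tt S α) x with h2 | h2
        · exact (le_tt hΘ hα).trans h2
        · exact absurd (le_uu hΘ hSle ⟨hx, h2⟩) (not_le.mpr hlt)
    · rw [ph_eq_tt hc] at h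
      exact (le_tt hΘ hα).trans h
  · intro h
    by_cases hc : cnd S α
    · rw [ph_eq_uu hc]; exact uu_tt_le.trans h
    · rw [ph_eq_tt hc]; exact tt_le hx h

lemma tt_mono {α β} (hβ : β ≤ Θ) (h : α ≤ β) : tt S α ≤ tt S β :=
  csInf_le_csInf (OrderBot.bddBelow _) ⟨Θ, hΘ, hβ⟩
    (inter_subset_inter_right S (Ici_subset_Ici.mpr h))

include hSle in
lemma ph_mono {α β} (hβ : β ≤ Θ) (h : α ≤ β) : ph S α ≤ ph S β := by
  rcases eq_or_lt_of_le (tt_mono hΘ hβ h) with he | hlt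
  · exact (ph_eq_of_tt_eq he).le
  · calc ph S α ≤ tt S α := ph_le_tt
      _ ≤ uu S (tt S β) := le_uu hΘ hSle ⟨tt_mem hΘ (h.trans hβ), hlt⟩
      _ ≤ ph S β := uu_tt_le_ph

include hSle in
lemma ph_idem {α} (hα : α ≤ Θ) : ph S (ph S α) = ph S α := by
  by_cases hc : cnd S α
  · have huΘ : uu S (tt S α) ≤ Θ := uu_tt_le.trans hα
    have htu : tt S (uu S (tt S α)) = tt S α := by
      apply le_antisymm
      · exact tt_le (tt_mem hΘ hα) (uu_tt_le.trans (le_tt hΘ hα))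
      · by_contra h
        push_neg at h
        have h2 := le_uu hΘ hSle ⟨tt_mem hΘ huΘ, h⟩
        have h3 := le_tt hΘ huΘ
        exact hc.1 ((le_antisymm h2 h3) ▸ tt_mem hΘ huΘ)
    rw [ph_eq_uu hc, ph_eq_uu ((cnd_congr htu).mpr hc), htu]
  · rw [ph_eq_tt hc]
    have htt : tt S (tt S α) = tt S α := tt_of_mem hΘ hSle (tt_mem hΘ hα)
    rw [ph_eq_tt ((cnd_congr htt).not.mpr hc)]
    exact tt_of_mem hΘ hSle (tt_mem hΘ hα)

include hSle in
/-- `ph` fixes points that are limits of `S` from below. -/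
lemma ph_fixed_of_cofinal {α} (hα : α ≤ Θ) (h0 : α ≠ 0)
    (hcof : ∀ c < α, (S ∩ Ioo c α).Nonempty) : ph S α = α := by
  have huα : uu S (tt S α) = α := by
    apply le_antisymm uu_tt_le
    by_contra h
    push_neg at h
    obtain ⟨y, hyS, hy1, hy2⟩ := hcof _ h
    exact absurd (le_uu hΘ hSle ⟨hyS, hy2.trans_le (le_tt hΘ hα)⟩) (not_le.mpr hy1)
  by_cases hαS : α ∈ S
  · rw [ph_eq_tt, tt_of_mem hΘ hSle hαS]
    intro hcon
    exact hcon.1 (by rw [huα]; exact hαS)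
  · have hne : (S ∩ Iio (tt S α)).Nonempty := by
      obtain ⟨y, hyS, _, hy2⟩ := hcof 0 (pos_iff_ne_zero.mpr h0)
      exact ⟨y, hyS, hy2.trans_le (le_tt hΘ hα)⟩
    rw [ph_eq_uu ⟨by rw [huα]; exact hαS, hne⟩, huα]

include hSle in
/-- Fixed points of `ph` are separated by elements of `S`. -/
lemma exists_sep {x y} (hx : x ≤ Θ) (hy : y ≤ Θ) (hfx : ph S x = x) (hfy : ph S y = y)
    (hxy : x < y) : ∃ z ∈ S, x ≤ z ∧ z < y := by
  refine ⟨tt S x, tt_mem hΘ hx, le_tt hΘ hx, ?_⟩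
  by_contra h
  push_neg at h
  by_cases hc : cnd S x
  · have hxu : x = uu S (tt S x) := hfx.symm.trans (ph_eq_uu hc)
    have hty : tt S y = tt S x := by
      apply le_antisymm (tt_le (tt_mem hΘ hx) h)
      by_contra h2
      push_neg at h2
      have h3 := le_uu hΘ hSle ⟨tt_mem hΘ hy, h2⟩
      exact absurd ((le_tt hΘ hy).trans h3) (not_le.mpr (hxu ▸ hxy))
    have hcy : cnd S y := (cnd_congr hty).mpr hc
    have : ph S y = uu S (tt S x) := by rw [ph_eq_uu hcy, hty]
    rw [hfy, ← hxu] at this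
    exact absurd this hxy.ne'
  · have : ph S x = tt S x := ph_eq_tt hc
    rw [hfx] at this
    exact absurd (h.trans_eq this.symm) (not_le.mpr hxy)

lemma tt_locally_const {c α x} (hα : α ≤ Θ) (hc : S ∩ Ioo c α = ∅)
    (hx1 : c < x) (hx2 : x ≤ α) : tt S x = tt S α := by
  apply le_antisymm (tt_mono hΘ hα hx2)
  apply tt_le (tt_mem hΘ (hx2.trans hα))
  by_contra hcon
  push_neg at hcon
  have : tt S x ∈ S ∩ Ioo c α :=
    ⟨tt_mem hΘ (hx2.trans hα), hx1.trans_le (le_tt hΘ (hx2.trans hα)), hcon⟩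
  rw [hc] at this
  exact this

end ProjAux

/-- Given a strictly increasing family `(ξ_σ)_{σ<ω₁}` of countable ordinals with `ξ_{ω₁} = ω₁`,
there is a continuous idempotent map `φ` on `[0,ω₁]` whose composition operator `Φ : f ↦ f ∘ φ`
is a norm-one-at-most linear projection of `C([0,ω₁])` onto the closed linear span of the
indicator functions `1_{[0,ξ_σ]}`, `σ ≤ ω₁`. -/
theorem exists_projection_onto_span_indicators (ξ : Ordinal → Ordinal)
    (hcount : ∀ σ < omega1, ξ σ < omega1)
    (hmono : ∀ σ τ : Ordinal, σ < τ → τ < omega1 → ξ σ < ξ τ)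
    (htop : ξ omega1 = omega1) :
    ∃ φ : Set.Iic omega1 → Set.Iic omega1, Continuous φ ∧ φ ∘ φ = φ ∧
      ∃ Φ : CC →L[ℝ] CC,
        (∀ (f : CC) (α : Set.Iic omega1), Φ f α = f (φ α)) ∧
        Φ.comp Φ = Φ ∧ ‖Φ‖ ≤ 1 ∧
        (LinearMap.range (Φ : CC →ₗ[ℝ] CC) : Set CC)
          = closure (Submodule.span ℝ {g : CC | ∃ σ ≤ omega1, g = indic (ξ σ)} : Set CC) := by
  classical
  set S : Set Ordinal := ξ '' Iic omega1 with hSdef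
  have hΘ : omega1 ∈ S := ⟨omega1, mem_Iic.mpr le_rfl, htop⟩
  have hSle : ∀ x ∈ S, x ≤ omega1 := by
    rintro x ⟨σ, hσ, rfl⟩
    rcases eq_or_lt_of_le (mem_Iic.mp hσ) with rfl | h
    · exact htop.le
    · exact (hcount _ h).le
  have hmono' : ∀ σ τ : Ordinal, σ ≤ τ → τ ≤ omega1 → ξ σ ≤ ξ τ := by
    intro σ τ h hτ
    rcases eq_or_lt_of_le h with rfl | hlt
    · exact le_rfl
    rcases eq_or_lt_of_le hτ with rfl | hτ'
    · rw [htop]; exact hSle _ ⟨σ, mem_Iic.mpr (hlt.le.trans hτ), rfl⟩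
    · exact (hmono σ τ hlt hτ').le
  -- the map φ
  have hph_le : ∀ a : Set.Iic omega1, ProjAux.ph S (a : Ordinal) ≤ omega1 :=
    fun a => ProjAux.ph_le_top hΘ hSle a.2
  set φ : Set.Iic omega1 → Set.Iic omega1 :=
    fun a => ⟨ProjAux.ph S (a : Ordinal), hph_le a⟩ with hφdef
  have hφcoe : ∀ a : Set.Iic omega1, (φ a : Ordinal) = ProjAux.ph S (a : Ordinal) := fun _ => rfl
  -- openness of basic sets
  have hopen1 : ∀ σ : Ordinal, IsOpen {x : Set.Iic omega1 | (x : Ordinal) ≤ σ} :=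
    fun σ => (isClopen_le omega1 σ).2
  have hopen2 : ∀ c a : Ordinal,
      IsOpen {x : Set.Iic omega1 | c < (x : Ordinal) ∧ (x : Ordinal) ≤ a} := by
    intro c a
    have he : {x : Set.Iic omega1 | c < (x : Ordinal) ∧ (x : Ordinal) ≤ a}
        = {x : Set.Iic omega1 | (x : Ordinal) ≤ c}ᶜ ∩ {x : Set.Iic omega1 | (x : Ordinal) ≤ a} := by
      ext x
      simp only [mem_setOf_eq, mem_inter_iff, mem_compl_iff, not_le]
    rw [he]
    exact ((isClopen_le omega1 c).1.isOpen_compl).inter (hopen1 a)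
  -- continuity
  have hφcont : Continuous φ := by
    rw [continuous_iff_continuousAt]
    intro a
    by_cases hev : (a : Ordinal) = 0 ∨ ∃ c < (a : Ordinal), S ∩ Ioo c (a : Ordinal) = ∅
    · -- φ is locally constant at a
      obtain ⟨N, hNopen, haN, hconst⟩ :
          ∃ N, IsOpen N ∧ a ∈ N ∧ ∀ x ∈ N, φ x = φ a := by
        rcases hev with h0 | ⟨c, hca, hc⟩
        · refine ⟨{x : Set.Iic omega1 | (x : Ordinal) ≤ (a : Ordinal)}, hopen1 _, by simp, ?_⟩
          intro x hx
          have hxa : x = a := by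
            apply Subtype.ext
            rw [h0] at hx ⊢
            exact nonpos_iff_eq_zero.mp hx
          rw [hxa]
        · refine ⟨{x : Set.Iic omega1 | c < (x : Ordinal) ∧ (x : Ordinal) ≤ (a : Ordinal)},
            hopen2 c a, ⟨hca, le_rfl⟩, ?_⟩
          intro x hx
          exact Subtype.ext
            (ProjAux.ph_eq_of_tt_eq (ProjAux.tt_locally_const hΘ a.2 hc hx.1 hx.2))
      have hev' : φ =ᶠ[nhds a] fun _ => φ a :=
        Filter.eventuallyEq_of_mem (hNopen.mem_nhds haN) hconst
      exact continuousAt_const.congr hev'.symm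
    · push_neg at hev
      obtain ⟨h0, hcof⟩ := hev
      have hfixa : ProjAux.ph S (a : Ordinal) = (a : Ordinal) :=
        ProjAux.ph_fixed_of_cofinal hΘ hSle a.2 h0 hcof
      have hφa : φ a = a := Subtype.ext hfixa
      rw [ContinuousAt, hφa, Filter.tendsto_def]
      intro U hU
      have hbot : (⟨0, Set.mem_Iic.mpr zero_le⟩ : Set.Iic omega1) < a := by
        rw [← Subtype.coe_lt_coe]
        exact pos_iff_ne_zero.mpr h0
      obtain ⟨l, hl, hlU⟩ := exists_Ioc_subset_of_mem_nhds hU ⟨_, hbot⟩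
      obtain ⟨y, hyS, hy1, hy2⟩ := hcof (l : Ordinal) (Subtype.coe_lt_coe.mpr hl)
      have hN : {x : Set.Iic omega1 | y < (x : Ordinal) ∧ (x : Ordinal) ≤ (a : Ordinal)}
          ∈ nhds a := (hopen2 y (a : Ordinal)).mem_nhds ⟨hy2, le_rfl⟩
      refine Filter.mem_of_superset hN ?_
      intro x hx
      apply hlU
      constructor
      · rw [← Subtype.coe_lt_coe, hφcoe]
        calc (l : Ordinal) < y := hy1
          _ ≤ ProjAux.uu S (ProjAux.tt S (x : Ordinal)) :=
            ProjAux.le_uu hΘ hSle ⟨hyS, hx.1.trans_le (ProjAux.le_tt hΘ x.2)⟩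
          _ ≤ ProjAux.ph S (x : Ordinal) := ProjAux.uu_tt_le_ph
      · rw [← Subtype.coe_le_coe, hφcoe]
        calc ProjAux.ph S (x : Ordinal) ≤ ProjAux.ph S (a : Ordinal) :=
            ProjAux.ph_mono hΘ hSle a.2 hx.2
          _ = (a : Ordinal) := hfixa
  -- idempotence
  have hφφ : φ ∘ φ = φ :=
    funext fun x => Subtype.ext (ProjAux.ph_idem hΘ hSle x.2)
  -- the operator
  set φC : C(Set.Iic omega1, Set.Iic omega1) := ⟨φ, hφcont⟩ with hφC
  set Φlin : CC →ₗ[ℝ] CC :=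
    { toFun := fun f => f.comp φC
      map_add' := fun f g => rfl
      map_smul' := fun c f => rfl } with hΦlin
  have hbound : ∀ f : CC, ‖Φlin f‖ ≤ 1 * ‖f‖ := by
    intro f
    rw [one_mul]
    exact (ContinuousMap.norm_le _ (norm_nonneg f)).2 fun x => f.norm_coe_le_norm (φ x)
  set Φ : CC →L[ℝ] CC := Φlin.mkContinuous 1 hbound with hΦdef
  have hΦapp : ∀ (f : CC) (x : Set.Iic omega1), Φ f x = f (φ x) := fun f x => rfl
  have hΦΦ : Φ.comp Φ = Φ := by
    apply ContinuousLinearMap.ext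
    intro f
    apply ContinuousMap.ext
    intro x
    show f (φ (φ x)) = f (φ x)
    have h := congrFun hφφ x
    simp only [Function.comp_apply] at h
    rw [h]
  have hnorm : ‖Φ‖ ≤ 1 := Φlin.mkContinuous_norm_le zero_le_one hbound
  -- indicator facts
  have hindic_apply : ∀ (σ : Ordinal) (x : Set.Iic omega1),
      indic σ x = if (x : Ordinal) ≤ σ then 1 else 0 := by
    intro σ x
    simp only [indic, ContinuousMap.coe_mk, Set.piecewise, Set.mem_setOf_eq]
  set G : Set CC := {g : CC | ∃ σ ≤ omega1, g = indic (ξ σ)} with hG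
  have hfix : ∀ σ ≤ omega1, Φ (indic (ξ σ)) = indic (ξ σ) := by
    intro σ hσ
    apply ContinuousMap.ext
    intro x
    rw [hΦapp, hindic_apply, hindic_apply]
    exact if_congr (by rw [hφcoe]; exact ProjAux.ph_le_iff hΘ hSle x.2 ⟨σ, mem_Iic.mpr hσ, rfl⟩)
      rfl rfl
  have hindic_one : indic omega1 = (1 : CC) := by
    apply ContinuousMap.ext
    intro x
    rw [hindic_apply, if_pos (mem_Iic.mp x.2), ContinuousMap.one_apply]
  have hindic_mul : ∀ a b : Ordinal, indic a * indic b = indic (a ⊓ b) := by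
    intro a b
    apply ContinuousMap.ext
    intro x
    rw [ContinuousMap.mul_apply, hindic_apply, hindic_apply, hindic_apply]
    by_cases h1 : (x : Ordinal) ≤ a <;> by_cases h2 : (x : Ordinal) ≤ b <;>
      simp [h1, h2, le_inf_iff]
  have hfixpt : ∀ x : Set.Iic omega1, x ∈ Set.range φ →
      ProjAux.ph S (x : Ordinal) = (x : Ordinal) := by
    rintro x ⟨x', rfl⟩
    exact ProjAux.ph_idem hΘ hSle x'.2
  -- the range identity
  have hrange : (LinearMap.range (Φ : CC →ₗ[ℝ] CC) : Set CC)
      = closure (Submodule.span ℝ G : Set CC) := by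
    apply Set.Subset.antisymm
    · -- range ⊆ closure of the span, via Stone-Weierstrass
      rintro f ⟨g, hg⟩
      have hffix : Φ f = f := by
        rw [← hg]
        calc Φ (Φ g) = (Φ.comp Φ) g := rfl
          _ = Φ g := by rw [hΦΦ]
      set Y : Set (Set.Iic omega1) := Set.range φ with hY
      haveI : CompactSpace Y := isCompact_iff_compactSpace.mp (isCompact_range hφcont)
      set ι : C(Y, Set.Iic omega1) := ⟨Subtype.val, continuous_subtype_val⟩ with hι
      set res : CC →ₐ[ℝ] C(Y, ℝ) := ContinuousMap.compRightAlgHom ℝ ℝ ι with hres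
      set φY : C(Set.Iic omega1, Y) :=
        ⟨fun x => ⟨φ x, Set.mem_range_self x⟩, hφcont.subtype_mk _⟩ with hφY
      set Ψ : C(Y, ℝ) →ₐ[ℝ] CC := ContinuousMap.compRightAlgHom ℝ ℝ φY with hΨ
      have hΨcont : Continuous Ψ := ContinuousMap.compRightAlgHom_continuous ℝ ℝ φY
      -- the restricted algebra separates points of Y
      have hsep : (Algebra.adjoin ℝ (⇑res '' G)).SeparatesPoints := by
        have key : ∀ u v : Y, (u : Set.Iic omega1) < v →
            ∃ z ∈ S, ((u : Set.Iic omega1) : Ordinal) ≤ z ∧ z < ((v : Set.Iic omega1) : Ordinal) := by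
          intro u v huv
          exact ProjAux.exists_sep hΘ hSle (u : Set.Iic omega1).2 (v : Set.Iic omega1).2
            (hfixpt _ u.2) (hfixpt _ v.2) (Subtype.coe_lt_coe.mpr huv)
        intro y₁ y₂ hne
        have hval : ∀ (σ : Ordinal) (w : Y),
            (res (indic (ξ σ))) w = indic (ξ σ) (w : Set.Iic omega1) := fun _ _ => rfl
        rcases lt_or_gt_of_ne hne with h | h
        · obtain ⟨z, hzS, hz1, hz2⟩ := key y₁ y₂ (Subtype.coe_lt_coe.mpr h)
          obtain ⟨σ, hσ, rfl⟩ := hzS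
          refine ⟨_, ⟨res (indic (ξ σ)),
            Algebra.subset_adjoin ⟨indic (ξ σ), ⟨σ, hσ, rfl⟩, rfl⟩, rfl⟩, ?_⟩
          show (res (indic (ξ σ))) y₁ ≠ (res (indic (ξ σ))) y₂
          rw [hval, hval, hindic_apply, hindic_apply, if_pos hz1, if_neg (not_le.mpr hz2)]
          exact one_ne_zero
        · obtain ⟨z, hzS, hz1, hz2⟩ := key y₂ y₁ (Subtype.coe_lt_coe.mpr h)
          obtain ⟨σ, hσ, rfl⟩ := hzS
          refine ⟨_, ⟨res (indic (ξ σ)),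
            Algebra.subset_adjoin ⟨indic (ξ σ), ⟨σ, hσ, rfl⟩, rfl⟩, rfl⟩, ?_⟩
          show (res (indic (ξ σ))) y₁ ≠ (res (indic (ξ σ))) y₂
          rw [hval, hval, hindic_apply, hindic_apply, if_pos hz1, if_neg (not_le.mpr hz2)]
          exact zero_ne_one
      -- Stone-Weierstrass
      have h1 : res f ∈ closure ((Algebra.adjoin ℝ (⇑res '' G) : Subalgebra ℝ C(Y, ℝ)) :
          Set C(Y, ℝ)) := by
        have := ContinuousMap.continuousMap_mem_subalgebra_closure_of_separatesPoints
          (Algebra.adjoin ℝ (⇑res '' G)) hsep (res f)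
        exact this
      -- the adjoined algebra is contained in the span of the restricted indicators
      set M : Submodule ℝ C(Y, ℝ) := Submodule.span ℝ (⇑res '' G) with hM
      have h1mem : (1 : C(Y, ℝ)) ∈ M := by
        apply Submodule.subset_span
        refine ⟨indic (ξ omega1), ⟨omega1, le_rfl, rfl⟩, ?_⟩
        rw [htop, hindic_one, map_one]
      have hMmul : ∀ x y : C(↑Y, ℝ), x ∈ M → y ∈ M → x * y ∈ M := by
        intro x y hx hy
        have hmm : x * y ∈ M * M := Submodule.mul_mem_mul hx hy
        rw [hM, Submodule.span_mul_span] at hmm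
        refine Submodule.span_le.mpr ?_ hmm
        rintro w hw
        rw [Set.mem_mul] at hw
        obtain ⟨p, hp, q, hq, rfl⟩ := hw
        obtain ⟨p', ⟨σ₁, hσ₁, rfl⟩, rfl⟩ := hp
        obtain ⟨q', ⟨σ₂, hσ₂, rfl⟩, rfl⟩ := hq
        have hximin : ξ σ₁ ⊓ ξ σ₂ = ξ (σ₁ ⊓ σ₂) := by
          rcases le_total σ₁ σ₂ with h' | h'
          · rw [inf_eq_left.mpr (hmono' σ₁ σ₂ h' hσ₂), inf_eq_left.mpr h']
          · rw [inf_eq_right.mpr (hmono' σ₂ σ₁ h' hσ₁), inf_eq_right.mpr h']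
        apply Submodule.subset_span
        refine ⟨indic (ξ (σ₁ ⊓ σ₂)), ⟨σ₁ ⊓ σ₂, le_trans inf_le_left hσ₁, rfl⟩, ?_⟩
        rw [← map_mul, hindic_mul, hximin]
      have hadj : (Algebra.adjoin ℝ (⇑res '' G) : Set C(Y, ℝ)) ⊆ (M : Set C(Y, ℝ)) :=
        fun x hx => (Algebra.adjoin_le (show ⇑res '' G ⊆ (M.toSubalgebra h1mem hMmul : Set _)
          from Submodule.subset_span)) hx
      have h2 : res f ∈ closure (M : Set C(Y, ℝ)) := closure_mono hadj h1
      -- pull back with Ψ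
      have h3 : f = Ψ (res f) := by
        apply ContinuousMap.ext
        intro x
        show f x = f (φ x)
        conv_lhs => rw [← hffix]
        rfl
      have h5 : ∀ v ∈ M, Ψ v ∈ Submodule.span ℝ G := by
        intro v hv
        induction hv using Submodule.span_induction with
        | mem w hw =>
          obtain ⟨gg, ⟨σ, hσ, rfl⟩, rfl⟩ := hw
          have : Ψ (res (indic (ξ σ))) = Φ (indic (ξ σ)) := rfl
          rw [this, hfix σ hσ]
          exact Submodule.subset_span ⟨σ, hσ, rfl⟩
        | zero => simp
        | add w₁ w₂ _ _ hw₁ hw₂ => rw [map_add]; exact add_mem hw₁ hw₂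
        | smul c w _ hw => rw [map_smul]; exact Submodule.smul_mem _ c hw
      have h4 : Ψ (res f) ∈ closure (⇑Ψ '' (M : Set C(Y, ℝ))) :=
        image_closure_subset_closure_image hΨcont ⟨res f, h2, rfl⟩
      rw [h3]
      refine closure_mono ?_ h4
      rintro w ⟨v, hv, rfl⟩
      exact h5 v hv
    · -- the closed span is contained in the range
      intro f hf
      have hK : Submodule.span ℝ G ≤ LinearMap.eqLocus (Φ : CC →ₗ[ℝ] CC) LinearMap.id := by
        rw [Submodule.span_le]
        rintro g ⟨σ, hσ, rfl⟩
        exact hfix σ hσ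
      have hcl : closure (Submodule.span ℝ G : Set CC) ⊆ {h : CC | Φ h = h} := by
        apply closure_minimal
        · intro g hg
          exact hK hg
        · exact isClosed_eq Φ.continuous continuous_id
      exact ⟨f, hcl hf⟩
  exact ⟨φ, hφcont, hφφ, Φ, hΦapp, hΦΦ, hnorm, hrange⟩
end
end

section
/- A linear subspace X of C([0,ω₁]) is separable if and only if there exists a countable ordinal σ such that every f ∈ X satisfies f(α) = f(ω₁) for all ordinals α with σ < α ≤ ω₁ (equivalently, X is contained in the range of the projection P̃σ). -/
set_option synthInstance.maxHeartbeats 1000000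
set_option maxHeartbeats 2000000

noncomputable section
open Set Ordinal

/-- The continuous retraction of `[0, ω₁]` fixing `[0, σ]` and sending `(σ, ω₁]` to `ω₁`. -/
def retr (σ : Ordinal) : C(Set.Iic omega1, Set.Iic omega1) :=
  letI : ∀ j : Set.Iic omega1, Decidable (j ∈ {α : Set.Iic omega1 | (α : Ordinal) ≤ σ}) :=
    fun _ => Classical.dec _
  ⟨({α : Set.Iic omega1 | (α : Ordinal) ≤ σ}).piecewise id
      (fun _ => ⟨omega1, Set.self_mem_Iic⟩),
    Continuous.piecewise
      (fun a ha => by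
        rw [(isClopen_le omega1 σ).frontier_eq] at ha
        exact absurd ha (Set.notMem_empty a))
      continuous_id continuous_const⟩

/-- The projection `P̃σ` on `C([0, ω₁])`: `(P̃σ f)(α) = f α` for `α ≤ σ`
and `(P̃σ f)(α) = f ω₁` for `σ < α ≤ ω₁`. -/
def Ptilde (σ : Ordinal) : CC →L[ℝ] CC :=
  LinearMap.mkContinuous
    { toFun := fun f => f.comp (retr σ)
      map_add' := fun f g => by ext x; simp
      map_smul' := fun c f => by ext x; simp }
    1
    (fun f => by
      rw [one_mul]
      exact (ContinuousMap.norm_le _ (norm_nonneg f)).mpr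
        fun x => ContinuousMap.norm_coe_le_norm f _)

/- ### Auxiliary lemmas -/

open Filter Topology Cardinal

lemma retr_eq_of_le {σ : Ordinal} {x : Set.Iic omega1} (h : (x : Ordinal) ≤ σ) :
    retr σ x = x := by
  simp only [retr, ContinuousMap.coe_mk]
  exact Set.piecewise_eq_of_mem _ _ _ h

lemma retr_eq_of_gt {σ : Ordinal} {x : Set.Iic omega1} (h : σ < (x : Ordinal)) :
    retr σ x = ⟨omega1, Set.self_mem_Iic⟩ := by
  simp only [retr, ContinuousMap.coe_mk]
  exact Set.piecewise_eq_of_notMem _ _ _ (not_le.mpr h)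

lemma Ptilde_apply (σ : Ordinal) (f : CC) (x : Set.Iic omega1) :
    Ptilde σ f x = f (retr σ x) := rfl

open TopologicalSpace in
/-- Any countable set of ordinals is second countable in the subspace topology. -/
lemma secondCountable_subtype_ordinal {s : Set Ordinal.{0}} (hs : s.Countable) :
    SecondCountableTopology s := by
  have : Countable s := hs.to_subtype
  set B : Set (Set Ordinal) := {t | ∃ a, t = Set.Ioi a ∨ t = Set.Iio a} with hB
  refine ⟨⟨Set.preimage ((↑) : s → Ordinal) '' B, ?_, ?_⟩⟩
  · have hsub : Set.preimage ((↑) : s → Ordinal) '' B ⊆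
        (Set.range fun m : s => Set.Ici m) ∪ (Set.range fun m : s => Set.Iio m)
          ∪ {∅, Set.univ} := by
      rintro A ⟨t, ⟨a, rfl | rfl⟩, rfl⟩
      · by_cases hA : (Set.preimage ((↑) : s → Ordinal) (Set.Ioi a)).Nonempty
        · obtain ⟨m, hmA, hmin⟩ := (@wellFounded_lt s _ _).has_min _ hA
          left; left
          refine ⟨m, ?_⟩
          ext x
          constructor
          · intro hx
            exact lt_of_lt_of_le hmA (Subtype.coe_le_coe.mpr (show m ≤ x from hx))
          · intro hx
            exact not_lt.mp (fun h => hmin x hx h)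
        · right
          left
          rw [Set.not_nonempty_iff_eq_empty] at hA
          exact hA
      · by_cases hA : ((Set.preimage ((↑) : s → Ordinal) (Set.Iio a))ᶜ).Nonempty
        · obtain ⟨m, hmA, hmin⟩ := (@wellFounded_lt s _ _).has_min _ hA
          left; right
          refine ⟨m, ?_⟩
          ext x
          constructor
          · intro hx
            by_contra h
            exact hmin x h hx
          · intro hx
            by_contra h
            exact hmA (Set.mem_preimage.mpr (Set.mem_Iio.mpr
              (lt_of_le_of_lt (Subtype.coe_le_coe.mpr (not_lt.mp h))
                (Set.mem_Iio.mp (Set.mem_preimage.mp hx)))))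
        · right; right
          rw [Set.not_nonempty_iff_eq_empty, compl_empty_iff] at hA
          simp [hA]
    exact Set.Countable.mono hsub
      (((Set.countable_range _).union (Set.countable_range _)).union
        ((Set.countable_singleton _).insert _))
  · have h1 : (instTopologicalSpaceSubtype : TopologicalSpace s)
        = TopologicalSpace.induced ((↑) : s → Ordinal) inferInstance := rfl
    rw [h1, show (inferInstance : TopologicalSpace Ordinal) = generateFrom
      {s | ∃ a, s = Ioi a ∨ s = Iio a} from OrderTopology.topology_eq_generate_intervals,
      induced_generateFrom_eq]

/-- Every continuous function on `[0, ω₁]` is eventually constant. -/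
lemma exists_tail (f : CC) : ∃ σ < omega1,
    ∀ α : Set.Iic omega1, σ < (α : Ordinal) → f α = f ⟨omega1, Set.self_mem_Iic⟩ := by
  set top : Set.Iic omega1 := ⟨omega1, Set.self_mem_Iic⟩ with htop
  have hne : omega1 ≠ 0 := (Ordinal.omega_pos 1).ne'
  have hbasis : (𝓝 top).HasBasis (· < omega1)
      (fun b => ((↑) : Set.Iic omega1 → Ordinal) ⁻¹' Set.Ioc b omega1) := by
    rw [htop, nhds_subtype_eq_comap]
    exact (SuccOrder.hasBasis_nhds_Ioc_of_exists_lt ⟨0, Ordinal.omega_pos 1⟩).comap _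
  have H : ∀ n : ℕ, ∃ b, b < omega1 ∧
      ((↑) : Set.Iic omega1 → Ordinal) ⁻¹' Set.Ioc b omega1 ⊆
        f ⁻¹' Metric.ball (f top) (1 / (n + 1)) := by
    intro n
    have hmem : f ⁻¹' Metric.ball (f top) (1 / (n + 1)) ∈ 𝓝 top :=
      f.continuous.continuousAt.preimage_mem_nhds
        (Metric.ball_mem_nhds _ (by positivity))
    exact hbasis.mem_iff.mp hmem
  choose b hb hsub using H
  refine ⟨⨆ n, b n, ?_, ?_⟩
  · exact Ordinal.iSup_lt_omega_one hb
  · intro α hα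
    have key : ∀ n : ℕ, dist (f α) (f top) < 1 / (n + 1) := by
      intro n
      have h1 : b n < (α : Ordinal) := lt_of_le_of_lt (Ordinal.le_iSup b n) hα
      have h2 : (α : Ordinal) ≤ omega1 := α.2
      have := hsub n (Set.mem_preimage.mpr ⟨h1, h2⟩)
      simpa [Metric.mem_ball, dist_comm] using this
    by_contra hne'
    have hd : 0 < dist (f α) (f top) := dist_pos.mpr hne'
    obtain ⟨n, hn⟩ := exists_nat_one_div_lt hd
    exact lt_asymm (key n) hn

/-- A linear subspace `X` of `C([0,ω₁])` is separable if and only if there is a countable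
ordinal `σ` such that every `f ∈ X` is constantly `f(ω₁)` on `(σ, ω₁]`; equivalently, `X` is
contained in the range of the projection `P̃σ`. -/
theorem subspace_separable_iff (X : Submodule ℝ CC) :
    TopologicalSpace.IsSeparable (X : Set CC) ↔
      ∃ σ < omega1,
        (∀ f ∈ X, ∀ α : Set.Iic omega1, σ < (α : Ordinal) →
          f α = f ⟨omega1, Set.self_mem_Iic⟩) ∧
        (X : Set CC) ⊆ Set.range (Ptilde σ) := by
  constructor
  · rintro ⟨c, hc, hXc⟩
    -- replace `c` by a nonempty countable set and enumerate it
    obtain ⟨F, hF⟩ := (hc.insert (0 : CC)).exists_eq_range (Set.insert_nonempty _ _)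
    have hXc' : (X : Set CC) ⊆ closure (Set.range F) := by
      rw [← hF]
      exact hXc.trans (closure_mono (Set.subset_insert _ _))
    choose b hb htail using fun n : ℕ => exists_tail (F n)
    set σ : Ordinal := ⨆ n, b n with hσdef
    have hσ : σ < omega1 := by
      exact Ordinal.iSup_lt_omega_one hb
    have hconst : ∀ f ∈ X, ∀ α : Set.Iic omega1, σ < (α : Ordinal) →
        f α = f ⟨omega1, Set.self_mem_Iic⟩ := by
      intro f hf α hα
      set top : Set.Iic omega1 := ⟨omega1, Set.self_mem_Iic⟩ with htop
      have hcl : f ∈ closure (Set.range F) := hXc' hf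
      by_contra hne'
      have hd : 0 < dist (f α) (f top) := dist_pos.mpr hne'
      obtain ⟨g, hg, hfg⟩ := Metric.mem_closure_iff.mp hcl
        (dist (f α) (f top) / 4) (by linarith)
      obtain ⟨n, rfl⟩ := hg
      have hgc : F n α = F n top :=
        htail n α (lt_of_le_of_lt (Ordinal.le_iSup b n) hα)
      have h1 : dist (f α) (F n α) ≤ dist f (F n) :=
        ContinuousMap.dist_apply_le_dist α
      have h2 : dist (F n top) (f top) ≤ dist f (F n) := by
        rw [dist_comm]
        exact ContinuousMap.dist_apply_le_dist top
      have hmid : dist (F n α) (F n top) = 0 := by rw [hgc, dist_self]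
      have htri := dist_triangle4 (f α) (F n α) (F n top) (f top)
      linarith
    refine ⟨σ, hσ, hconst, fun f hf => ⟨f, ?_⟩⟩
    ext x
    rw [Ptilde_apply]
    by_cases h : (x : Ordinal) ≤ σ
    · rw [retr_eq_of_le h]
    · rw [retr_eq_of_gt (not_le.mp h)]
      exact (hconst f hf x (not_le.mp h)).symm
  · rintro ⟨σ, hσ, hconst, hsub⟩
    set K : Set Ordinal := Set.Iic σ ∪ {omega1} with hKdef
    have hKcount : K.Countable := by
      have hlim : Order.IsSuccLimit omega1 := by
        exact Cardinal.isSuccLimit_omega 1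
      have hlt : Order.succ σ < omega1 := hlim.succ_lt hσ
      have h1 : (Set.Iio (Order.succ σ)).Countable := by
        rw [Cardinal.countable_iff_lt_aleph_one, Ordinal.mk_Iio_ordinal,
          Cardinal.lift_lt_aleph_one]
        have hlt' : Order.succ σ < (Cardinal.aleph 1).ord := by
          rw [Cardinal.ord_aleph]; exact hlt
        exact Cardinal.lt_ord.mp hlt'
      refine Set.Countable.union (h1.mono ?_) (Set.countable_singleton _)
      intro x hx
      exact Set.mem_Iio.mpr (Order.lt_succ_iff.mpr (Set.mem_Iic.mp hx))
    have hcpt : IsCompact (Set.Iic omega1) := by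
      have := isCompact_Icc (a := (⊥ : Ordinal)) (b := omega1)
      rwa [Set.Icc_bot] at this
    have hKcl : IsClosed K := isClosed_Iic.union isClosed_singleton
    have hKsub : K ⊆ Set.Iic omega1 := by
      rintro x (hx | hx)
      · exact le_trans hx hσ.le
      · exact le_of_eq hx
    haveI : CompactSpace K :=
      isCompact_iff_compactSpace.mp (hcpt.of_isClosed_subset hKcl hKsub)
    haveI : SecondCountableTopology K :=
      secondCountable_subtype_ordinal hKcount
    have hmemK : ∀ x : Set.Iic omega1, ((retr σ x : Set.Iic omega1) : Ordinal) ∈ K := by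
      intro x
      by_cases h : (x : Ordinal) ≤ σ
      · rw [retr_eq_of_le h]; exact Or.inl h
      · rw [retr_eq_of_gt (not_le.mp h)]; exact Or.inr rfl
    set r' : C(Set.Iic omega1, K) :=
      ⟨fun x => ⟨((retr σ x : Set.Iic omega1) : Ordinal), hmemK x⟩,
        (continuous_subtype_val.comp (retr σ).continuous).subtype_mk _⟩ with hr'
    set Φ : C(K, ℝ) → CC := fun g => g.comp r' with hΦ
    have hΦcont : Continuous Φ := ContinuousMap.continuous_precomp r'
    have hsep := TopologicalSpace.isSeparable_range hΦcont
    refine hsep.mono (fun f hf => ?_)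
    obtain ⟨f', rfl⟩ := hsub hf
    refine ⟨f'.comp ⟨fun k => ⟨(k : Ordinal), hKsub k.2⟩,
      continuous_subtype_val.subtype_mk _⟩, ?_⟩
    ext x
    rfl
end
end

section
/- A linear subspace X of c₀(ω₁) is separable if and only if there exists a countable ordinal α such that every f ∈ X satisfies f(β) = 0 for all ordinals β with α < β < ω₁. -/
set_option synthInstance.maxHeartbeats 1000000
set_option maxHeartbeats 2000000

noncomputable section
open Set Ordinal

/-- Type synonym endowing an arbitrary type with the discrete topology. -/
def DiscType (Γ : Type*) : Type _ := Γ
instance (Γ : Type*) : TopologicalSpace (DiscType Γ) := ⊥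
instance (Γ : Type*) : DiscreteTopology (DiscType Γ) := ⟨rfl⟩

/-- `c₀(Γ)`: the Banach space of real-valued functions on `Γ` vanishing at infinity,
i.e. `{γ : |f γ| ≥ ε}` is finite for every `ε > 0`, with the supremum norm. -/
abbrev czero (Γ : Type*) := ZeroAtInftyContinuousMap (DiscType Γ) ℝ

/-- The set `[0, ω₁)` of countable ordinals, the index set of `c₀(ω₁)`. -/
abbrev Gamma1 : Type 1 := {α : Ordinal.{0} // α < omega1}

open Cardinal

attribute [local instance] Classical.propDecidable

lemma czero_finite_ge {Γ : Type*} (f : czero Γ) {ε : ℝ} (hε : 0 < ε) :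
    {x : DiscType Γ | ε ≤ ‖f x‖}.Finite := by
  have h : Filter.Tendsto f (Filter.cocompact _) (nhds 0) := zero_at_infty f
  rw [Filter.cocompact_eq_cofinite] at h
  have h2 := Metric.tendsto_nhds.mp h ε hε
  rw [Filter.eventually_cofinite] at h2
  refine h2.subset fun x hx => ?_
  simp only [mem_setOf_eq, not_lt, dist_zero_right]
  exact hx

lemma czero_support_countable {Γ : Type*} (f : czero Γ) :
    {x : DiscType Γ | f x ≠ 0}.Countable := by
  have : {x : DiscType Γ | f x ≠ 0} ⊆ ⋃ n : ℕ, {x | 1 / (n + 1 : ℝ) ≤ ‖f x‖} := by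
    intro x hx
    obtain ⟨n, hn⟩ := exists_nat_one_div_lt (norm_pos_iff.mpr hx)
    exact mem_iUnion.mpr ⟨n, le_of_lt hn⟩
  refine (Set.Countable.mono this ?_)
  exact countable_iUnion fun n => (czero_finite_ge f (by positivity)).countable

lemma czero_dist_apply_le {Γ : Type*} (f g : czero Γ) (x : DiscType Γ) :
    dist (f x) (g x) ≤ dist f g :=
  BoundedContinuousFunction.dist_coe_le_dist (f := f.toBCF) (g := g.toBCF) x

lemma czero_dist_le {Γ : Type*} (f g : czero Γ) {C : ℝ} (hC : 0 ≤ C)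
    (h : ∀ x, dist (f x) (g x) ≤ C) : dist f g ≤ C :=
  (BoundedContinuousFunction.dist_le (f := f.toBCF) (g := g.toBCF) hC).mpr h

def mkfin {Γ : Type*} (e : ℕ → Γ) (p : Σ n : ℕ, Fin n → ℚ) : czero Γ where
  toFun := fun x => if h : ∃ i, i < p.1 ∧ e i = x then
      (p.2 ⟨Nat.find h, (Nat.find_spec h).1⟩ : ℝ) else 0
  continuous_toFun := continuous_of_discreteTopology
  zero_at_infty' := by
    rw [Filter.cocompact_eq_cofinite]
    have hfin : {x : DiscType Γ | (fun x => if h : ∃ i, i < p.1 ∧ e i = x then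
        (p.2 ⟨Nat.find h, (Nat.find_spec h).1⟩ : ℝ) else 0) x ≠ 0}.Finite := by
      refine ((Set.finite_Iio p.1).image e).subset fun x hx => ?_
      simp only [mem_setOf_eq] at hx
      by_contra hc
      refine hx ?_
      refine dif_neg fun hex => hc ?_
      obtain ⟨i, hi, hei⟩ := hex
      exact ⟨i, hi, hei⟩
    refine Filter.Tendsto.congr' ?_ tendsto_const_nhds
    rw [Filter.eventuallyEq_iff_exists_mem]
    exact ⟨_, hfin.compl_mem_cofinite, fun x hx => (not_not.mp hx).symm⟩

lemma mkfin_apply {Γ : Type*} (e : ℕ → Γ) (p : Σ n : ℕ, Fin n → ℚ) (x : DiscType Γ) :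
    mkfin e p x = if h : ∃ i, i < p.1 ∧ e i = x then
      (p.2 ⟨Nat.find h, (Nat.find_spec h).1⟩ : ℝ) else 0 := rfl

lemma omega1_pos : (0 : Ordinal) < omega1 :=
  omega0_pos.trans omega0_lt_omega_one

/-- A linear subspace `X` of `c₀(ω₁)` is separable if and only if there is a countable ordinal
`α` such that every `f ∈ X` vanishes at every ordinal `β` with `α < β < ω₁`. -/
theorem subspace_of_c0omega1_separable_iff (X : Submodule ℝ (czero Gamma1)) :
    TopologicalSpace.IsSeparable (X : Set (czero Gamma1)) ↔
      ∃ α < omega1, ∀ f ∈ X, ∀ β : DiscType Gamma1, α < β.1 → f β = 0 := by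
  constructor
  · rintro ⟨c, hc_count, hc_sub⟩
    have hT : (insert (⟨0, omega1_pos⟩ : Gamma1)
        {γ : Gamma1 | ∃ d ∈ c, d γ ≠ 0}).Countable := by
      refine Set.Countable.insert _ ?_
      have : {γ : Gamma1 | ∃ d ∈ c, d γ ≠ 0} = ⋃ d ∈ c, {γ : Gamma1 | d γ ≠ 0} := by
        ext γ; simp
      rw [this]
      exact Set.Countable.biUnion hc_count fun d _ => czero_support_countable d
    obtain ⟨g, hg⟩ := hT.exists_eq_range ⟨_, Set.mem_insert _ _⟩
    set α : Ordinal := ⨆ n, (g n).1 with hα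
    have hαlt : α < omega1 := by
      exact Ordinal.iSup_lt_omega_one (fun n => (g n).2)
    refine ⟨α, hαlt, ?_⟩
    intro f hf β hβ
    have hβT : β ∉ insert (⟨0, omega1_pos⟩ : Gamma1) {γ : Gamma1 | ∃ d ∈ c, d γ ≠ 0} := by
      intro hmem
      rw [hg] at hmem
      obtain ⟨n, hn⟩ := hmem
      have : β.1 ≤ α := by
        rw [hα, ← hn]
        exact Ordinal.le_iSup (fun n => (g n).1) n
      exact absurd hβ (not_lt.mpr this)
    have hsmall : ∀ ε > (0 : ℝ), ‖f β‖ < ε := by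
      intro ε hε
      obtain ⟨d, hd, hdist⟩ := Metric.mem_closure_iff.mp (hc_sub hf) ε hε
      have hdβ : d β = 0 := by
        by_contra h
        exact hβT (Set.mem_insert_iff.mpr (Or.inr ⟨d, hd, h⟩))
      calc ‖f β‖ = dist (f β) (d β) := by rw [hdβ, dist_zero_right]
        _ ≤ dist f d := czero_dist_apply_le f d β
        _ < ε := hdist
    by_contra h
    exact absurd (hsmall ‖f β‖ (norm_pos_iff.mpr h)) (lt_irrefl _)
  · rintro ⟨α, hα, hvan⟩
    set S : Set Gamma1 := {γ | γ.1 ≤ α} with hSdef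
    have hsucclt : Order.succ α < omega1 := by
      exact (Cardinal.isSuccLimit_omega 1).succ_lt hα
    have hS : S.Countable := by
      rw [Cardinal.countable_iff_lt_aleph_one]
      have h1 : #↥S ≤ #↥(Set.Iio (Order.succ α)) := by
        refine Cardinal.mk_le_of_injective
          (f := fun γ : S => (⟨γ.1.1, Set.mem_Iio.mpr (Order.lt_succ_iff.mpr γ.2)⟩ : Set.Iio (Order.succ α))) ?_
        intro a b hab
        simp only [Subtype.mk.injEq] at hab
        exact Subtype.ext (Subtype.ext hab)
      have h2 : #↥(Set.Iio (Order.succ α)) = Cardinal.lift.{1} (Order.succ α).card :=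
        Ordinal.mk_Iio_ordinal _
      have h3 : (Order.succ α).card < Cardinal.aleph 1 := by
        rw [← Cardinal.lt_ord, Cardinal.ord_aleph]
        exact hsucclt
      calc #↥S ≤ Cardinal.lift.{1} (Order.succ α).card := h1.trans_eq h2
        _ < Cardinal.aleph 1 := Cardinal.lift_lt_aleph_one.mpr h3
    have hSne : S.Nonempty := ⟨⟨0, omega1_pos⟩, zero_le (a := α)⟩
    obtain ⟨e, he⟩ := hS.exists_eq_range hSne
    refine ⟨Set.range (mkfin e), Set.countable_range _, ?_⟩
    intro f hf
    rw [Metric.mem_closure_iff]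
    intro ε hε
    have hδ : (0 : ℝ) < ε / 2 := by linarith
    set K : Set (DiscType Gamma1) := {x | ε / 2 ≤ ‖f x‖} with hKdef
    have hK : K.Finite := czero_finite_ge f hδ
    have hKS : K ⊆ S := by
      intro x hx
      by_contra hxS
      have hx0 : f x = 0 := hvan f hf x (lt_of_not_ge hxS)
      rw [hKdef, mem_setOf_eq, hx0, norm_zero] at hx
      linarith
    have hidx : ∀ x ∈ K, ∃ i, e i = x := by
      intro x hx
      have := hKS hx
      rw [he] at this
      exact this
    choose idx hidx' using hidx
    set n : ℕ := (hK.toFinset.attach.sup fun x => idx x.1 (hK.mem_toFinset.mp x.2)) + 1 with hn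
    have hKn : ∀ x (hx : x ∈ K), idx x hx < n := by
      intro x hx
      have hmem : x ∈ hK.toFinset := hK.mem_toFinset.mpr hx
      have := Finset.le_sup (f := fun x : hK.toFinset =>
        idx x.1 (hK.mem_toFinset.mp x.2)) (Finset.mem_attach _ ⟨x, hmem⟩)
      calc idx x hx = idx x (hK.mem_toFinset.mp hmem) := rfl
        _ ≤ _ := this
        _ < n := Nat.lt_succ_self _
    choose q hq using fun i : Fin n => exists_rat_near (f (e i.1)) hδ
    refine ⟨mkfin e ⟨n, q⟩, ⟨⟨n, q⟩, rfl⟩, ?_⟩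
    have hpt : ∀ x : DiscType Gamma1, dist (f x) (mkfin e ⟨n, q⟩ x) ≤ ε / 2 := by
      intro x
      rw [mkfin_apply]
      by_cases h : ∃ i, i < n ∧ e i = x
      · rw [dif_pos h]
        have hfind := Nat.find_spec h
        have heq : e (Nat.find h) = x := hfind.2
        have h2 := hq ⟨Nat.find h, (Nat.find_spec h).1⟩
        have h3 : f x = f (e (Nat.find h)) := by rw [heq]
        rw [Real.dist_eq, h3]
        convert h2.le using 4

      · rw [dif_neg h]
        have hxK : x ∉ K := by
          intro hx
          exact h ⟨idx x hx, hKn x hx, hidx' x hx⟩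
        rw [dist_zero_right]
        rw [hKdef, mem_setOf_eq, not_le] at hxK
        exact le_of_lt hxK
    calc dist f (mkfin e ⟨n, q⟩) ≤ ε / 2 := czero_dist_le _ _ hδ.le hpt
      _ < ε := by linarith
end
end
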